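/- Let H be a real Hilbert space, let μ ∈ ℝ and ρ > 0 with μρ < 1/4, and let z, w ∈ H with z ≠ 0. Then the inequality ⟨z, w⟩ ≥ μ‖z‖² + ρ‖w‖² holds if and only if the complex number c := (‖w‖/‖z‖)·(cos ∠(z,w) + i·sin ∠(z,w)) lies in the closed disk of center 1/(2ρ) and radius √(1 − 4μρ)/(2ρ), i.e. |c − 1/(2ρ)| ≤ √(1 − 4μρ)/(2ρ). -/

import Mathlib

open Classical in
/-- The angle between two vectors in a real Hilbert space: `arccos(⟪z,w⟫/(‖z‖‖w‖))`
if both are nonzero, and `0` otherwise. -/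
noncomputable def vecAngle {H : Type*} [NormedAddCommGroup H] [InnerProductSpace ℝ H]
    (z w : H) : ℝ :=
  if z ≠ 0 ∧ w ≠ 0 then Real.arccos ((inner ℝ z w : ℝ) / (‖z‖ * ‖w‖)) else 0

theorem stmt_0 {H : Type*} [NormedAddCommGroup H] [InnerProductSpace ℝ H] [CompleteSpace H]
    (μ ρ : ℝ) (hρ : 0 < ρ) (hμρ : μ * ρ < 1 / 4) (z w : H) (hz : z ≠ 0) :
    (inner ℝ z w : ℝ) ≥ μ * ‖z‖ ^ 2 + ρ * ‖w‖ ^ 2 ↔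
      ‖(((‖w‖ / ‖z‖ : ℝ) : ℂ) *
              ((Real.cos (vecAngle z w) : ℂ) + (Real.sin (vecAngle z w) : ℂ) * Complex.I) -
            ((1 / (2 * ρ) : ℝ) : ℂ))‖ ≤
        Real.sqrt (1 - 4 * μ * ρ) / (2 * ρ) := by
  have hn : (0:ℝ) < ‖z‖ := norm_pos_iff.mpr hz
  have hB : (0:ℝ) ≤ 1 - 4 * μ * ρ := by nlinarith
  -- rewrite the RHS as a single square root
  have hRHS : Real.sqrt (1 - 4 * μ * ρ) / (2 * ρ)
      = Real.sqrt ((1 - 4 * μ * ρ) / (4 * ρ ^ 2)) := by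
    rw [Real.sqrt_div hB]
    congr 1
    rw [show (4 * ρ ^ 2 : ℝ) = (2 * ρ) ^ 2 by ring, Real.sqrt_sq (by positivity)]
  by_cases hw : w = 0
  · subst hw
    have h0 : vecAngle z (0:H) = 0 := by simp [vecAngle]
    rw [h0]
    simp only [inner_zero_right, norm_zero, zero_div, Real.cos_zero, Real.sin_zero,
      Complex.ofReal_zero, Complex.ofReal_one, zero_mul, zero_sub, map_neg_eq_map, norm_neg]
    rw [Complex.norm_real, Real.norm_eq_abs, abs_of_pos (by positivity), hRHS]
    rw [show (1 / (2 * ρ) : ℝ) = Real.sqrt (1 / (4 * ρ ^ 2)) by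
      rw [Real.sqrt_div (by norm_num), show (4 * ρ ^ 2 : ℝ) = (2 * ρ) ^ 2 by ring,
        Real.sqrt_sq (by positivity), Real.sqrt_one]]
    rw [Real.sqrt_le_sqrt_iff (by positivity), div_le_div_iff₀ (by positivity) (by positivity)]
    constructor
    · intro h
      have hμ : μ ≤ 0 := by nlinarith [mul_pos hn hn]
      nlinarith [mul_nonneg (neg_nonneg.mpr hμ) (by positivity : (0:ℝ) ≤ ρ ^ 3)]
    · intro h
      have hμ : μ ≤ 0 := by nlinarith [mul_pos (mul_pos hρ hρ) hρ]
      nlinarith [mul_nonneg (neg_nonneg.mpr hμ) (sq_nonneg ‖z‖)]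
  · set t : ℝ := (inner ℝ z w : ℝ) / (‖z‖ * ‖w‖) with ht
    have hθ : vecAngle z w = Real.arccos t := by simp [vecAngle, hz, hw, ht]
    have hmw : (0:ℝ) < ‖w‖ := norm_pos_iff.mpr hw
    have habs : |t| ≤ 1 := abs_real_inner_div_norm_mul_norm_le_one z w
    have ht1 : -1 ≤ t := neg_le_of_abs_le habs
    have ht2 : t ≤ 1 := le_of_abs_le habs
    have hcos : Real.cos (vecAngle z w) = t := by rw [hθ, Real.cos_arccos ht1 ht2]
    have hsin : Real.sin (vecAngle z w) = Real.sqrt (1 - t ^ 2) := by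
      rw [hθ, Real.sin_arccos]
    set r : ℝ := ‖w‖ / ‖z‖ with hr
    set E : ℂ := ((r : ℝ) : ℂ) *
        ((Real.cos (vecAngle z w) : ℂ) + (Real.sin (vecAngle z w) : ℂ) * Complex.I) -
        ((1 / (2 * ρ) : ℝ) : ℂ) with hE
    have hre : E.re = r * t - 1 / (2 * ρ) := by simp [hE, hcos]
    have him : E.im = r * Real.sqrt (1 - t ^ 2) := by simp [hE, hsin]
    have habsE : ‖E‖ = Real.sqrt (r ^ 2 - r * t / ρ + 1 / (4 * ρ ^ 2)) := by
      rw [Complex.norm_def, Complex.normSq_apply, hre, him]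
      congr 1
      have hs : Real.sqrt (1 - t ^ 2) * Real.sqrt (1 - t ^ 2) = 1 - t ^ 2 :=
        Real.mul_self_sqrt (by nlinarith)
      have him2 : r * Real.sqrt (1 - t ^ 2) * (r * Real.sqrt (1 - t ^ 2))
          = r ^ 2 * (1 - t ^ 2) := by rw [mul_mul_mul_comm, hs]; ring
      rw [him2]
      field_simp
      ring
    rw [habsE, hRHS, Real.sqrt_le_sqrt_iff (by positivity)]
    have hrt : r * t = (inner ℝ z w : ℝ) / ‖z‖ ^ 2 := by
      rw [hr, ht]; field_simp
    have hr2 : r ^ 2 = ‖w‖ ^ 2 / ‖z‖ ^ 2 := by rw [hr]; rw [div_pow]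
    rw [hrt, hr2]
    rw [ge_iff_le, ← sub_nonneg, ← sub_nonneg (b := ‖w‖ ^ 2 / ‖z‖ ^ 2 - _ + _)]
    have heq : (1 - 4 * μ * ρ) / (4 * ρ ^ 2) -
        (‖w‖ ^ 2 / ‖z‖ ^ 2 - (inner ℝ z w : ℝ) / ‖z‖ ^ 2 / ρ + 1 / (4 * ρ ^ 2))
        = ((inner ℝ z w : ℝ) - (μ * ‖z‖ ^ 2 + ρ * ‖w‖ ^ 2)) / (‖z‖ ^ 2 * ρ) := by
      field_simp
      ring
    rw [heq, le_div_iff₀ (by positivity), zero_mul]
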